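/- arXiv:2110.15436 — 2 statements merged into one kernel-verified Lean document; each statement's English description precedes it below -/
import Mathlib

section
/- For real numbers a ≥ b ≥ 0 and a real exponent q ≥ 1, one has (a + b)^q ≤ a^q + (2^q − 1) a^(q−1) b. -/
/-- For real numbers `a ≥ b ≥ 0` and a real exponent `q ≥ 1`,
`(a + b)^q ≤ a^q + (2^q − 1) a^(q−1) b`. -/
theorem stmt_0 (a b q : ℝ) (hb : 0 ≤ b) (hba : b ≤ a) (hq : 1 ≤ q) :
    (a + b) ^ q ≤ a ^ q + (2 ^ q - 1) * a ^ (q - 1) * b := by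
  rcases eq_or_lt_of_le (hb.trans hba) with ha | ha
  · have hb0 : b = 0 := le_antisymm (hba.trans ha.symm.le) hb
    subst hb0
    simp [← ha]
  · have hdiv : 0 ≤ b / a := by positivity
    have hdiv1 : 1 - b / a + b / a = 1 := by ring
    have hdiv0 : 0 ≤ 1 - b / a := by
      have : b / a ≤ 1 := (div_le_one ha).2 hba
      linarith
    have h := (convexOn_rpow hq).2 (Set.mem_Ici.2 ha.le)
      (Set.mem_Ici.2 (by positivity : (0:ℝ) ≤ 2 * a)) hdiv0 hdiv hdiv1
    simp only [smul_eq_mul] at h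
    have hcomb : (1 - b / a) * a + b / a * (2 * a) = a + b := by
      field_simp
      ring
    rw [hcomb] at h
    refine h.trans (le_of_eq ?_)
    rw [Real.mul_rpow (by norm_num) ha.le,
      show q = (q - 1) + 1 by ring, Real.rpow_add ha, Real.rpow_one]
    field_simp
    ring
end

section
/- For every integer n ≥ 5, the integral over ℝⁿ of |y|²/(1+|y|²)ⁿ dy equals (n(n−4))/(4(n−1)(n−2)) times the integral over ℝⁿ of 1/(1+|y|²)^(n−2) dy. -/
open MeasureTheory Set Filter Real

/-- Continuity of the basic integrand. -/
lemma contAux (m k : ℕ) : Continuous (fun r : ℝ => r ^ m / (1 + r ^ 2) ^ k) := by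
  apply Continuous.div (by continuity) (by continuity)
  intro x
  positivity

/-- Integrability of `r^m / (1+r^2)^k` on `(0, ∞)` when `m + 1 < 2k`. -/
lemma integrableAux (m k : ℕ) (h : m + 1 < 2 * k) :
    IntegrableOn (fun r : ℝ => r ^ m / (1 + r ^ 2) ^ k) (Ioi 0) := by
  have hcast : (m : ℝ) - 2 * k < -1 := by
    have : (m : ℝ) + 1 < 2 * k := by exact_mod_cast h
    linarith
  have h1 : IntegrableOn (fun r : ℝ => r ^ m / (1 + r ^ 2) ^ k) (Ioc 0 1) :=
    (contAux m k).integrableOn_Ioc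
  have h2 : IntegrableOn (fun r : ℝ => r ^ m / (1 + r ^ 2) ^ k) (Ioi 1) := by
    refine (integrableOn_Ioi_rpow_of_lt hcast one_pos).mono' ?_ ?_
    · exact ((contAux m k).aestronglyMeasurable).restrict
    · filter_upwards [ae_restrict_mem measurableSet_Ioi] with x hx
      have hx1 : (1 : ℝ) < x := hx
      have hx0 : (0 : ℝ) < x := by linarith
      have hb : x ^ m / (1 + x ^ 2) ^ k ≤ x ^ m / (x ^ 2) ^ k := by
        apply div_le_div_of_nonneg_left (by positivity) (by positivity)
        exact pow_le_pow_left₀ (by positivity) (by linarith) k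
      have heq : x ^ m / (x ^ 2) ^ k = x ^ ((m : ℝ) - 2 * k) := by
        rw [← pow_mul, ← Real.rpow_natCast x m, ← Real.rpow_natCast x (2 * k),
          ← Real.rpow_sub hx0]
        congr 1
        push_cast
        ring
      rw [norm_of_nonneg (by positivity)]
      calc x ^ m / (1 + x ^ 2) ^ k ≤ x ^ m / (x ^ 2) ^ k := hb
        _ = x ^ ((m : ℝ) - 2 * k) := heq
  have : Ioc (0:ℝ) 1 ∪ Ioi 1 = Ioi 0 := Ioc_union_Ioi_eq_Ioi zero_le_one
  rw [← this]
  exact h1.union h2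

/-- Limit at infinity. -/
lemma tendstoAux (p k : ℕ) (h : p < 2 * k) :
    Tendsto (fun r : ℝ => r ^ p / (1 + r ^ 2) ^ k) atTop (nhds 0) := by
  have hcast : (0 : ℝ) < 2 * k - p := by
    have : (p : ℝ) < 2 * k := by exact_mod_cast h
    linarith
  apply squeeze_zero' (Eventually.filter_mono (le_refl atTop) ?_)
    (g := fun x : ℝ => x ^ (-(2 * (k:ℝ) - p)))
    ?_ (tendsto_rpow_neg_atTop hcast)
  · filter_upwards [eventually_ge_atTop (1:ℝ)] with x hx
    positivity
  · filter_upwards [eventually_ge_atTop (1:ℝ)] with x hx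
    have hx0 : (0 : ℝ) < x := by linarith
    have hb : x ^ p / (1 + x ^ 2) ^ k ≤ x ^ p / (x ^ 2) ^ k := by
      apply div_le_div_of_nonneg_left (by positivity) (by positivity)
      exact pow_le_pow_left₀ (by positivity) (by linarith) k
    have heq : x ^ p / (x ^ 2) ^ k = x ^ (-(2 * (k:ℝ) - p)) := by
      rw [← pow_mul, ← Real.rpow_natCast x p, ← Real.rpow_natCast x (2 * k),
        ← Real.rpow_sub hx0]
      congr 1
      push_cast
      ring
    rw [← heq]
    exact hb

/-- Integration by parts recurrence. -/
lemma ibpAux (m j : ℕ) (h : m + 1 < 2 * (j + 1)) :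
    ∫ r in Ioi (0:ℝ), r ^ (m + 2) / (1 + r ^ 2) ^ (j + 2) =
      ((m : ℝ) + 1) / (2 * (j + 1)) * ∫ r in Ioi (0:ℝ), r ^ m / (1 + r ^ 2) ^ (j + 1) := by
  set c : ℝ := ((m : ℝ) + 1) / (2 * ((j : ℝ) + 1)) with hc
  set g : ℝ → ℝ := fun r => -(r ^ (m + 1) / (1 + r ^ 2) ^ (j + 1)) / (2 * ((j : ℝ) + 1)) with hg
  set g' : ℝ → ℝ := fun r =>
    r ^ (m + 2) / (1 + r ^ 2) ^ (j + 2) - c * (r ^ m / (1 + r ^ 2) ^ (j + 1)) with hg'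
  have hderiv : ∀ x : ℝ, HasDerivAt g (g' x) x := by
    intro x
    have hne : (1 + x ^ 2) ^ (j + 1) ≠ 0 := by positivity
    have h1 : HasDerivAt (fun r : ℝ => r ^ (m + 1)) (((m:ℝ) + 1) * x ^ m) x := by
      simpa using hasDerivAt_pow (m + 1) x
    have h2 : HasDerivAt (fun r : ℝ => (1 + r ^ 2) ^ (j + 1))
        ((j + 1 : ℕ) * (1 + x ^ 2) ^ j * (2 * x)) x := by
      have hb : HasDerivAt (fun r : ℝ => 1 + r ^ 2) (2 * x) x := by
        simpa using ((hasDerivAt_pow 2 x).const_add 1)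
      simpa using hb.fun_pow (j + 1)
    have h3 := ((h1.fun_mul (h2.fun_inv hne)).div_const (2 * ((j : ℝ) + 1))).fun_neg
    have hne2 : (1 + x ^ 2) ≠ 0 := by positivity
    convert h3 using 1
    · rfl
    · rfl
    · funext r
      simp [hg, div_eq_mul_inv]
    · simp only [hg', hc]
      field_simp [hg', hc]
      push_cast
      ring
  have intA : IntegrableOn (fun r : ℝ => r ^ (m + 2) / (1 + r ^ 2) ^ (j + 2)) (Ioi 0) :=
    integrableAux (m + 2) (j + 2) (by omega)
  have intB : IntegrableOn (fun r : ℝ => r ^ m / (1 + r ^ 2) ^ (j + 1)) (Ioi 0) :=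
    integrableAux m (j + 1) h
  have intg' : IntegrableOn g' (Ioi 0) := intA.sub (intB.const_mul c)
  have htend : Tendsto g atTop (nhds 0) := by
    have := ((tendstoAux (m + 1) (j + 1) (by omega)).neg).div_const (2 * ((j : ℝ) + 1))
    simpa [hg] using this
  have key : ∫ x in Ioi (0:ℝ), g' x = 0 - g 0 :=
    integral_Ioi_of_hasDerivAt_of_tendsto (hderiv 0).continuousAt.continuousWithinAt
      (fun x _ => hderiv x) intg' htend
  have hg0 : g 0 = 0 := by simp [hg]
  rw [hg0, sub_zero] at key
  have split : ∫ x in Ioi (0:ℝ), g' x =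
      (∫ r in Ioi (0:ℝ), r ^ (m + 2) / (1 + r ^ 2) ^ (j + 2)) -
        c * ∫ r in Ioi (0:ℝ), r ^ m / (1 + r ^ 2) ^ (j + 1) := by
    rw [hg']
    rw [integral_sub intA (intB.const_mul c), MeasureTheory.integral_const_mul]
  rw [split] at key
  linarith [key]

/-- For every integer `n ≥ 5`,
`∫_{ℝⁿ} |y|²/(1+|y|²)ⁿ dy = (n(n−4))/(4(n−1)(n−2)) · ∫_{ℝⁿ} 1/(1+|y|²)^(n−2) dy`. -/
theorem stmt_1 (n : ℕ) (hn : 5 ≤ n) :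
    (∫ y : EuclideanSpace ℝ (Fin n), ‖y‖ ^ 2 / (1 + ‖y‖ ^ 2) ^ n) =
      ((n : ℝ) * ((n : ℝ) - 4)) / (4 * ((n : ℝ) - 1) * ((n : ℝ) - 2)) *
        ∫ y : EuclideanSpace ℝ (Fin n), 1 / (1 + ‖y‖ ^ 2) ^ (n - 2) := by
  obtain ⟨m, rfl⟩ : ∃ m, n = m + 5 := ⟨n - 5, by omega⟩
  have hdim : Module.finrank ℝ (EuclideanSpace ℝ (Fin (m + 5))) = m + 5 :=
    finrank_euclideanSpace_fin
  have e1 := MeasureTheory.integral_fun_norm_addHaar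
    (volume : Measure (EuclideanSpace ℝ (Fin (m + 5))))
    (fun r : ℝ => r ^ 2 / (1 + r ^ 2) ^ (m + 5))
  have e2 := MeasureTheory.integral_fun_norm_addHaar
    (volume : Measure (EuclideanSpace ℝ (Fin (m + 5))))
    (fun r : ℝ => 1 / (1 + r ^ 2) ^ (m + 3))
  rw [hdim] at e1 e2
  have hsub25 : m + 5 - 2 = m + 3 := rfl
  rw [hsub25]
  rw [show (∫ y : EuclideanSpace ℝ (Fin (m + 5)), ‖y‖ ^ 2 / (1 + ‖y‖ ^ 2) ^ (m + 5)) =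
      ∫ y : EuclideanSpace ℝ (Fin (m + 5)),
        (fun r : ℝ => r ^ 2 / (1 + r ^ 2) ^ (m + 5)) ‖y‖ from rfl, e1]
  rw [show (∫ y : EuclideanSpace ℝ (Fin (m + 5)), 1 / (1 + ‖y‖ ^ 2) ^ (m + 3)) =
      ∫ y : EuclideanSpace ℝ (Fin (m + 5)),
        (fun r : ℝ => 1 / (1 + r ^ 2) ^ (m + 3)) ‖y‖ from rfl, e2]
  have hsub51 : m + 5 - 1 = m + 4 := rfl
  rw [hsub51]
  -- rewrite the 1D integrals
  have i1 : (∫ y in Ioi (0:ℝ), y ^ (m + 4) • ((fun r : ℝ => r ^ 2 / (1 + r ^ 2) ^ (m + 5)) y)) =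
      ∫ r in Ioi (0:ℝ), r ^ (m + 6) / (1 + r ^ 2) ^ (m + 5) := by
    congr 1
    funext y
    rw [smul_eq_mul]
    ring
  have i2 : (∫ y in Ioi (0:ℝ), y ^ (m + 4) • ((fun r : ℝ => 1 / (1 + r ^ 2) ^ (m + 3)) y)) =
      ∫ r in Ioi (0:ℝ), r ^ (m + 4) / (1 + r ^ 2) ^ (m + 3) := by
    congr 1
    funext y
    rw [smul_eq_mul]
    ring
  rw [i1, i2]
  set C : ℝ := ∫ r in Ioi (0:ℝ), r ^ (m + 4) / (1 + r ^ 2) ^ (m + 3) with hC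
  set C4 : ℝ := ∫ r in Ioi (0:ℝ), r ^ (m + 4) / (1 + r ^ 2) ^ (m + 4) with hC4
  have A := ibpAux (m + 4) (m + 3) (by omega)
  have B := ibpAux (m + 4) (m + 2) (by omega)
  -- B's RHS integrals : exponents m+4 over (m+3): matches C
  have hsub : C - C4 = ∫ r in Ioi (0:ℝ), r ^ (m + 6) / (1 + r ^ 2) ^ (m + 4) := by
    rw [hC, hC4, ← MeasureTheory.integral_sub (integrableAux (m + 4) (m + 3) (by omega))
      (integrableAux (m + 4) (m + 4) (by omega))]
    congr 1
    funext r
    have h0 : (0:ℝ) < 1 + r ^ 2 := by positivity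
    field_simp
    ring
  have hB' : C - C4 = ((m : ℝ) + 4 + 1) / (2 * ((m : ℝ) + 2 + 1)) * C := by
    rw [hsub]
    convert B using 3 <;> push_cast <;> ring
  have hA' : (∫ r in Ioi (0:ℝ), r ^ (m + 6) / (1 + r ^ 2) ^ (m + 5)) =
      ((m : ℝ) + 4 + 1) / (2 * ((m : ℝ) + 3 + 1)) * C4 := by
    convert A using 3 <;> push_cast <;> ring
  rw [hA']
  have hC4' : C4 = C - ((m : ℝ) + 4 + 1) / (2 * ((m : ℝ) + 2 + 1)) * C := by linarith
  rw [hC4']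
  rw [nsmul_eq_mul, nsmul_eq_mul, smul_eq_mul, smul_eq_mul]
  have h3 : (m : ℝ) + 3 ≠ 0 := by positivity
  have h4 : (m : ℝ) + 4 ≠ 0 := by positivity
  have key : ((m : ℝ) + 4 + 1) / (2 * ((m : ℝ) + 3 + 1)) *
      (C - ((m : ℝ) + 4 + 1) / (2 * ((m : ℝ) + 2 + 1)) * C) =
      ((m : ℝ) + 5) * ((m : ℝ) + 1) / (4 * (((m : ℝ) + 4) * ((m : ℝ) + 3))) * C := by
    field_simp
    ring
  rw [key]
  push_cast
  ring
end
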